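/- For every real number α ≥ 1 and every real number x with 0 ≤ x ≤ 1/α, it holds that x ≤ (1 + 1/α)·log(1 + x), where log denotes the natural logarithm. -/

import Mathlib

/-- For every real `α ≥ 1` and every real `x` with `0 ≤ x ≤ 1/α`,
`x ≤ (1 + 1/α) · log (1 + x)`. -/
theorem stmt_15 (α : ℝ) (hα : 1 ≤ α) (x : ℝ) (hx0 : 0 ≤ x) (hx1 : x ≤ 1 / α) :
    x ≤ (1 + 1 / α) * Real.log (1 + x) := by
  have hx1' : 0 < 1 + x := by linarith
  have hαpos : 0 < α := by linarith
  -- log(1+x) ≥ x/(1+x)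
  have h1 : x / (1 + x) ≤ Real.log (1 + x) := by
    have := Real.log_le_sub_one_of_pos (x := 1 / (1 + x)) (by positivity)
    rw [Real.log_div one_ne_zero (ne_of_gt hx1'), Real.log_one] at this
    have h2 : 1 - 1 / (1 + x) = x / (1 + x) := by field_simp; ring
    linarith [this, h2]
  have h3 : x ≤ (1 + 1 / α) * (x / (1 + x)) := by
    rw [le_div_iff₀ hαpos] at hx1
    rw [← mul_div_assoc, le_div_iff₀ hx1', ← sub_nonneg]
    have : (1 + 1/α) * x - x * (1 + x) = x * (1/α - x) := by ring
    rw [this]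
    have : 0 ≤ 1/α - x := by
      rw [sub_nonneg, le_div_iff₀ hαpos]; linarith
    positivity
  have h4 : 0 ≤ 1 + 1 / α := by positivity
  calc x ≤ (1 + 1/α) * (x / (1+x)) := h3
    _ ≤ (1 + 1/α) * Real.log (1+x) := by exact mul_le_mul_of_nonneg_left h1 h4
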